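/- Let Z := (Z_1,...,Z_n) in B(Y) with r(Z) < 1 and C ∈ B(H, Y). The positive solution of the Lyapunov equation X = ∑_{i=1}^n Z_i X Z_i* + CC* is unique: if X ≥ 0 is another solution, then X = ∑_{k=0}^∞ ∑_{|α|=k} Z_α CC* Z_α*. -/
import Mathlib


/-- `Z_α := Z_{i_1} ⋯ Z_{i_k}` for a word `α` in the free semigroup on `n`
generators (`Z_∅ = I`). -/
noncomputable def wordProd {H : Type*} [NormedAddCommGroup H] [NormedSpace ℂ H]
    {n : ℕ} (Z : Fin n → H →L[ℂ] H) (α : List (Fin n)) : H →L[ℂ] H :=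
  (α.map Z).prod


open ContinuousLinearMap

section Aux
set_option linter.unusedSectionVars false
variable {Y : Type*} [NormedAddCommGroup Y] [InnerProductSpace ℂ Y] [CompleteSpace Y]
variable {n : ℕ}

lemma wordProd_cons (Z : Fin n → Y →L[ℂ] Y) (i : Fin n) (l : List (Fin n)) :
    wordProd Z (i :: l) = Z i ∘L wordProd Z l := by
  simp [wordProd, ContinuousLinearMap.mul_def]

lemma ofFn_cons {k : ℕ} (i : Fin n) (β : Fin k → Fin n) :
    List.ofFn (Fin.cons i β : Fin (k+1) → Fin n) = i :: List.ofFn β := by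
  rw [List.ofFn_succ]; simp

noncomputable def Phi (Z : Fin n → Y →L[ℂ] Y) (T : Y →L[ℂ] Y) : Y →L[ℂ] Y :=
  ∑ i, Z i ∘L T ∘L adjoint (Z i)

lemma Phi_add (Z : Fin n → Y →L[ℂ] Y) (A B : Y →L[ℂ] Y) :
    Phi Z (A + B) = Phi Z A + Phi Z B := by
  simp [Phi, comp_add, add_comp, Finset.sum_add_distrib]

lemma Phi_iterate_add (Z : Fin n → Y →L[ℂ] Y) (m : ℕ) (A B : Y →L[ℂ] Y) :
    (Phi Z)^[m] (A + B) = (Phi Z)^[m] A + (Phi Z)^[m] B := by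
  induction m generalizing A B with
  | zero => simp
  | succ m ih => simp [Function.iterate_succ_apply, Phi_add, ih]

lemma sum_words_eq_iterate (Z : Fin n → Y →L[ℂ] Y) (T : Y →L[ℂ] Y) (k : ℕ) :
    ∑ α : Fin k → Fin n,
      wordProd Z (List.ofFn α) ∘L T ∘L adjoint (wordProd Z (List.ofFn α))
      = (Phi Z)^[k] T := by
  induction k with
  | zero =>
      simp [wordProd, ContinuousLinearMap.one_def, ContinuousLinearMap.adjoint_id]
  | succ k ih =>
      rw [Function.iterate_succ_apply', ← ih]
      rw [← Fintype.sum_equiv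
        (⟨fun p => Fin.cons p.1 p.2, fun α => (α 0, Fin.tail α),
         fun p => by simp [Fin.tail_cons], fun α => by simp [Fin.cons_self_tail]⟩ :
          (Fin n × (Fin k → Fin n)) ≃ (Fin (k+1) → Fin n))
        (fun p => wordProd Z (List.ofFn (Fin.cons p.1 p.2)) ∘L T ∘L
          adjoint (wordProd Z (List.ofFn (Fin.cons p.1 p.2)))) _ (fun p => rfl)]
      rw [Fintype.sum_prod_type, Phi]
      refine Finset.sum_congr rfl fun i _ => ?_
      simp only [ContinuousLinearMap.comp_finset_sum, ContinuousLinearMap.finset_sum_comp]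
      refine Finset.sum_congr rfl fun β _ => ?_
      simp [ofFn_cons, wordProd_cons, ContinuousLinearMap.adjoint_comp,
        ContinuousLinearMap.comp_assoc]

open scoped InnerProductSpace in
lemma conj_norm_le {ι : Type*} [Fintype ι] (A : ι → Y →L[ℂ] Y) (T : Y →L[ℂ] Y) :
    ‖∑ a, A a ∘L T ∘L adjoint (A a)‖ ≤ ‖T‖ * ‖∑ a, A a ∘L adjoint (A a)‖ := by
  set S := ∑ a, A a ∘L adjoint (A a) with hSdef
  set R := ∑ a, A a ∘L T ∘L adjoint (A a) with hRdef
  have hsum : ∀ u : Y, ∑ a, ‖adjoint (A a) u‖^2 ≤ ‖S‖ * ‖u‖^2 := by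
    intro u
    have h1 : (∑ a, ‖adjoint (A a) u‖^2 : ℝ) = RCLike.re (⟪u, S u⟫_ℂ) := by
      rw [hSdef]
      simp only [ContinuousLinearMap.sum_apply, inner_sum, map_sum,
        ContinuousLinearMap.comp_apply]
      refine (Finset.sum_congr rfl fun a _ => ?_).symm
      rw [← ContinuousLinearMap.adjoint_inner_left, inner_self_eq_norm_sq]
    rw [h1]
    calc RCLike.re (⟪u, S u⟫_ℂ) ≤ ‖(⟪u, S u⟫_ℂ)‖ := RCLike.re_le_norm _
      _ ≤ ‖u‖ * ‖S u‖ := norm_inner_le_norm _ _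
      _ ≤ ‖u‖ * (‖S‖ * ‖u‖) := by
          exact mul_le_mul_of_nonneg_left (S.le_opNorm u) (norm_nonneg u)
      _ = ‖S‖ * ‖u‖^2 := by ring
  refine ContinuousLinearMap.opNorm_le_bound _ (by positivity) fun u => ?_
  have hcs : ∀ v : Y, ∑ a, ‖adjoint (A a) v‖ * ‖adjoint (A a) u‖ ≤ ‖S‖ * ‖v‖ * ‖u‖ := by
    intro v
    have h2 := Finset.sum_mul_sq_le_sq_mul_sq Finset.univ
      (fun a => ‖adjoint (A a) v‖) (fun a => ‖adjoint (A a) u‖)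
    have h3 := hsum v
    have h4 := hsum u
    have h5 : (0:ℝ) ≤ ∑ a, ‖adjoint (A a) v‖ * ‖adjoint (A a) u‖ := by positivity
    have hb : (0:ℝ) ≤ ‖S‖ * ‖v‖ * ‖u‖ := by positivity
    have hg : (0:ℝ) ≤ ∑ a, ‖adjoint (A a) u‖^2 := by positivity
    have h8 : (∑ a, ‖adjoint (A a) v‖ * ‖adjoint (A a) u‖)^2 ≤ (‖S‖ * ‖v‖ * ‖u‖)^2 := by
      refine le_trans h2 (le_trans (mul_le_mul h3 h4 hg (by positivity)) (le_of_eq ?_))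
      ring
    exact (pow_le_pow_iff_left₀ h5 hb two_ne_zero).mp h8
  have key : ‖R u‖^2 ≤ ‖T‖ * (‖S‖ * ‖R u‖ * ‖u‖) := by
    have h6 : (‖R u‖:ℝ)^2 = RCLike.re (⟪R u, R u⟫_ℂ) := (inner_self_eq_norm_sq _).symm
    have h7 : ∀ v : Y, (⟪v, R u⟫_ℂ) = ∑ a, ⟪adjoint (A a) v, T (adjoint (A a) u)⟫_ℂ := by
      intro v
      conv_lhs => rw [hRdef]
      simp only [ContinuousLinearMap.sum_apply, inner_sum,
        ContinuousLinearMap.comp_apply]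
      exact Finset.sum_congr rfl fun a _ =>
        (ContinuousLinearMap.adjoint_inner_left _ _ _).symm
    calc ‖R u‖^2 = RCLike.re (⟪R u, R u⟫_ℂ) := h6
      _ ≤ ‖(⟪R u, R u⟫_ℂ)‖ := RCLike.re_le_norm _
      _ = ‖∑ a, ⟪adjoint (A a) (R u), T (adjoint (A a) u)⟫_ℂ‖ := by rw [h7 (R u)]
      _ ≤ ∑ a, ‖(⟪adjoint (A a) (R u), T (adjoint (A a) u)⟫_ℂ)‖ := norm_sum_le _ _
      _ ≤ ∑ a, ‖adjoint (A a) (R u)‖ * (‖T‖ * ‖adjoint (A a) u‖) := by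
          refine Finset.sum_le_sum fun a _ => ?_
          exact le_trans (norm_inner_le_norm _ _)
            (mul_le_mul_of_nonneg_left (T.le_opNorm _) (norm_nonneg _))
      _ = ‖T‖ * ∑ a, ‖adjoint (A a) (R u)‖ * ‖adjoint (A a) u‖ := by
          rw [Finset.mul_sum]; exact Finset.sum_congr rfl fun a _ => by ring
      _ ≤ ‖T‖ * (‖S‖ * ‖R u‖ * ‖u‖) :=
          mul_le_mul_of_nonneg_left (hcs (R u)) (norm_nonneg T)
  rcases eq_or_lt_of_le (norm_nonneg (R u)) with h | h
  · rw [← h]; positivity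
  · nlinarith [norm_nonneg T, norm_nonneg S, norm_nonneg u]

end Aux

/-- Uniqueness of the positive solution of the Lyapunov equation: if `r(Z) < 1`,
`X ≥ 0` and `X = ∑_i Z_i X Z_i* + CC*`, then `X = ∑_k ∑_{|α|=k} Z_α CC* Z_α*`. -/
theorem lyapunov_positive_solution_unique
    {Y H : Type*} [NormedAddCommGroup Y] [InnerProductSpace ℂ Y] [CompleteSpace Y]
    [NormedAddCommGroup H] [InnerProductSpace ℂ H] [CompleteSpace H]
    {n : ℕ} (Z : Fin n → Y →L[ℂ] Y)
    (hsr : ∃ L : ℝ, L < 1 ∧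
      Filter.Tendsto
        (fun k : ℕ =>
          ‖∑ α : Fin (k + 1) → Fin n,
              wordProd Z (List.ofFn α) ∘L
                ContinuousLinearMap.adjoint (wordProd Z (List.ofFn α))‖
            ^ (1 / (2 * ((k : ℝ) + 1))))
        Filter.atTop (nhds L))
    (C : H →L[ℂ] Y) (X : Y →L[ℂ] Y) (hXpos : X.IsPositive)
    (hX : X = (∑ i, Z i ∘L X ∘L ContinuousLinearMap.adjoint (Z i)) +
            C ∘L ContinuousLinearMap.adjoint C) :
    Filter.Tendsto
      (fun m : ℕ => ∑ k ∈ Finset.range m,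
        ∑ α : Fin k → Fin n,
          wordProd Z (List.ofFn α) ∘L (C ∘L ContinuousLinearMap.adjoint C) ∘L
            ContinuousLinearMap.adjoint (wordProd Z (List.ofFn α)))
      Filter.atTop (nhds X) := by
  obtain ⟨L, hL1, hLt⟩ := hsr
  have hX' : X = Phi Z X + C ∘L ContinuousLinearMap.adjoint C := hX
  set D := C ∘L ContinuousLinearMap.adjoint C with hD
  -- iteration identity
  have hiter : ∀ m : ℕ, X = (∑ k ∈ Finset.range m, (Phi Z)^[k] D) + (Phi Z)^[m] X := by
    intro m
    induction m with
    | zero => simp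
    | succ m ih =>
        have step : (Phi Z)^[m] X = (Phi Z)^[m+1] X + (Phi Z)^[m] D := by
          calc (Phi Z)^[m] X = (Phi Z)^[m] (Phi Z X + D) := by rw [← hX']
            _ = (Phi Z)^[m] (Phi Z X) + (Phi Z)^[m] D := Phi_iterate_add _ _ _ _
            _ = (Phi Z)^[m+1] X + (Phi Z)^[m] D := by
                rw [← Function.iterate_succ_apply]
        rw [Finset.sum_range_succ]
        calc X = (∑ k ∈ Finset.range m, (Phi Z)^[k] D) + (Phi Z)^[m] X := ih
          _ = (∑ k ∈ Finset.range m, (Phi Z)^[k] D) +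
              ((Phi Z)^[m+1] X + (Phi Z)^[m] D) := by rw [← step]
          _ = (∑ k ∈ Finset.range m, (Phi Z)^[k] D) + (Phi Z)^[m] D +
              (Phi Z)^[m+1] X := by abel
  -- the partial sums equal X - remainder
  have hfun : ∀ m : ℕ,
      (∑ k ∈ Finset.range m,
        ∑ α : Fin k → Fin n,
          wordProd Z (List.ofFn α) ∘L D ∘L
            ContinuousLinearMap.adjoint (wordProd Z (List.ofFn α)))
      = X - (Phi Z)^[m] X := by
    intro m
    rw [Finset.sum_congr rfl (fun k _ => sum_words_eq_iterate Z D k)]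
    exact eq_sub_of_add_eq (hiter m).symm
  -- the remainder tends to zero
  set g : ℕ → ℝ := fun m =>
    ‖∑ α : Fin m → Fin n,
        wordProd Z (List.ofFn α) ∘L
          ContinuousLinearMap.adjoint (wordProd Z (List.ofFn α))‖ with hg
  have hg0 : ∀ m, 0 ≤ g m := fun m => norm_nonneg _
  have hL0 : 0 ≤ L := ge_of_tendsto' hLt
    (fun k => Real.rpow_nonneg (norm_nonneg _) _)
  set r : ℝ := (1 + L) / 2 with hr
  have hr0 : 0 < r := by rw [hr]; linarith
  have hr1 : r < 1 := by rw [hr]; linarith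
  have hLr : L < r := by rw [hr]; linarith
  have hev : ∀ᶠ k in Filter.atTop,
      g (k + 1) ^ (1 / (2 * ((k : ℝ) + 1))) < r := hLt.eventually_lt_const hLr
  have key : ∀ᶠ k in Filter.atTop, g (k + 1) ≤ (r ^ 2) ^ (k + 1) := by
    filter_upwards [hev] with k hk
    have e2 : ((2 * (k + 1) : ℕ) : ℝ) = 2 * ((k : ℝ) + 1) := by push_cast; ring
    have hne : 2 * ((k : ℝ) + 1) ≠ 0 := by positivity
    have hrepr : g (k + 1)
        = (g (k + 1) ^ ((1 : ℝ) / (2 * ((k : ℝ) + 1)))) ^ (2 * (k + 1) : ℕ) := by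
      rw [← Real.rpow_natCast (g (k + 1) ^ ((1 : ℝ) / (2 * ((k : ℝ) + 1)))) (2 * (k + 1)),
        ← Real.rpow_mul (hg0 _), e2, one_div_mul_cancel hne, Real.rpow_one]
    rw [hrepr]
    calc (g (k + 1) ^ ((1 : ℝ) / (2 * ((k : ℝ) + 1)))) ^ (2 * (k + 1) : ℕ)
        ≤ r ^ (2 * (k + 1) : ℕ) :=
          pow_le_pow_left₀ (Real.rpow_nonneg (hg0 _) _) hk.le _
      _ = (r ^ 2) ^ (k + 1) := by rw [pow_mul]
  have hgeo : Filter.Tendsto (fun k : ℕ => (r ^ 2) ^ (k + 1)) Filter.atTop (nhds 0) := by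
    have h2 : r ^ 2 < 1 := by nlinarith
    exact (tendsto_pow_atTop_nhds_zero_of_lt_one (by positivity) h2).comp
      (Filter.tendsto_add_atTop_nat 1)
  have hgshift : Filter.Tendsto (fun k : ℕ => g (k + 1)) Filter.atTop (nhds 0) :=
    squeeze_zero' (Filter.Eventually.of_forall fun k => hg0 _) key hgeo
  have hgz : Filter.Tendsto g Filter.atTop (nhds 0) :=
    (Filter.tendsto_add_atTop_iff_nat 1).mp hgshift
  have hRnorm : ∀ m : ℕ, ‖(Phi Z)^[m] X‖ ≤ ‖X‖ * g m := by
    intro m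
    rw [← sum_words_eq_iterate Z X m, hg]
    exact conj_norm_le _ _
  have hR0 : Filter.Tendsto (fun m : ℕ => (Phi Z)^[m] X) Filter.atTop (nhds 0) := by
    rw [tendsto_zero_iff_norm_tendsto_zero]
    refine squeeze_zero (fun m => norm_nonneg _) hRnorm ?_
    have := hgz.const_mul ‖X‖
    simpa using this
  have : Filter.Tendsto (fun m : ℕ => X - (Phi Z)^[m] X) Filter.atTop (nhds (X - 0)) :=
    tendsto_const_nhds.sub hR0
  rw [sub_zero] at this
  simpa only [hfun] using this
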